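/- Let p be a prime, λ a partition of d with at most n parts, and pλ := (pλ_1, …, pλ_n), a partition of pd with at most n parts. Then every partition μ of d with at most n parts with c(μ) = c(λ) satisfies μ ⊴ λ if and only if every partition ν of pd with at most n parts with c(ν) = c(pλ) satisfies ν ⊴ pλ. (Combinatorial form of Lemma 4.4(b): the multiplicity of L(pλ) in H^0(pd) equals that of L(λ) in H^0(d).) -/

import Mathlib

/-- `l` is a partition of `d` with at most `n` parts: a weakly decreasing tuple
(indexed from 0, vanishing from index `n` on) of nonnegative integers summing to `d`. -/
def IsPartition (n d : ℕ) (l : ℕ → ℕ) : Prop :=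
  Antitone l ∧ (∀ i, n ≤ i → l i = 0) ∧ ∑ i ∈ Finset.range n, l i = d

/-- `carry p n β i` is `c_{i+1}(β)`, the amount carried past the `p^(i+1)`-column when
`β 0, …, β (n-1)` are added in base `p`. -/
def carry (p n : ℕ) (β : ℕ → ℕ) (i : ℕ) : ℕ :=
  (∑ j ∈ Finset.range n, β j % p ^ (i + 1)) / p ^ (i + 1)

/-- `Dominates l m` : `l` dominates `m`, i.e. `m ⊴ l`. -/
def Dominates (l m : ℕ → ℕ) : Prop :=
  ∀ k, ∑ i ∈ Finset.range k, m i ≤ ∑ i ∈ Finset.range k, l i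

lemma carry_pmul_zero (p n : ℕ) (β : ℕ → ℕ) :
    carry p n (fun j => p * β j) 0 = 0 := by
  unfold carry
  simp [pow_one, Nat.mul_mod_right]

lemma carry_pmul_succ (p n : ℕ) (hp : 0 < p) (β : ℕ → ℕ) (i : ℕ) :
    carry p n (fun j => p * β j) (i + 1) = carry p n β i := by
  unfold carry
  have hpow : p ^ (i + 1 + 1) = p * p ^ (i + 1) := pow_succ' p (i + 1)
  have h : ∀ j, (p * β j) % p ^ (i + 1 + 1) = p * (β j % p ^ (i + 1)) := by
    intro j
    rw [hpow]
    exact Nat.mul_mod_mul_left p _ _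
  simp only [h]
  rw [← Finset.mul_sum, hpow, Nat.mul_div_mul_left _ _ hp]

lemma isPartition_pmul (p n d : ℕ) (l : ℕ → ℕ) (h : IsPartition n d l) :
    IsPartition n (p * d) (fun j => p * l j) := by
  obtain ⟨hmono, hzero, hsum⟩ := h
  refine ⟨fun a b hab => Nat.mul_le_mul_left p (hmono hab),
    fun i hi => by simp [hzero i hi], ?_⟩
  rw [← Finset.mul_sum, hsum]

theorem max_for_carry_pattern_iff_p_mul
    (p n d : ℕ) (hp : p.Prime) (lam : ℕ → ℕ) (hlam : IsPartition n d lam) :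
    (∀ mu : ℕ → ℕ, IsPartition n d mu →
        (∀ i, carry p n mu i = carry p n lam i) → Dominates lam mu) ↔
      (∀ nu : ℕ → ℕ, IsPartition n (p * d) nu →
        (∀ i, carry p n nu i = carry p n (fun j => p * lam j) i) →
          Dominates (fun j => p * lam j) nu) := by
  have hp1 : 0 < p := hp.pos
  constructor
  · -- forward: d-statement implies pd-statement
    intro H nu hnu hcnu
    obtain ⟨hmono, hzero, hsum⟩ := hnu
    -- carry 0 of nu is 0
    have h0 : carry p n nu 0 = 0 := by
      rw [hcnu 0, carry_pmul_zero]
    -- the sum of the residues mod p is < p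
    have hlt : ∑ j ∈ Finset.range n, nu j % p ^ (0 + 1) < p ^ (0 + 1) := by
      by_contra hcon
      push_neg at hcon
      have := Nat.div_pos hcon (pow_pos hp1 _)
      unfold carry at h0
      omega
    simp only [pow_one, zero_add] at hlt
    -- the sum of residues is divisible by p
    have hmod : (∑ j ∈ Finset.range n, nu j % p) % p = 0 := by
      have h1 : (∑ j ∈ Finset.range n, nu j) % p = 0 := by
        rw [hsum]; exact Nat.mul_mod_right p d
      rwa [Finset.sum_nat_mod] at h1
    have hsum0 : ∑ j ∈ Finset.range n, nu j % p = 0 := by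
      rwa [Nat.mod_eq_of_lt hlt] at hmod
    have hdvd : ∀ j, p ∣ nu j := by
      intro j
      by_cases hj : j < n
      · have := (Finset.sum_eq_zero_iff.mp hsum0) j (Finset.mem_range.mpr hj)
        exact Nat.dvd_of_mod_eq_zero this
      · rw [hzero j (le_of_not_gt hj)]
        exact dvd_zero p
    set mu := fun j => nu j / p with hmu_def
    have hnu_eq : nu = fun j => p * mu j := by
      funext j
      exact (Nat.mul_div_cancel' (hdvd j)).symm
    have hmu_part : IsPartition n d mu := by
      refine ⟨fun a b hab => Nat.div_le_div_right (hmono hab),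
        fun i hi => by rw [hmu_def]; simp [hzero i hi], ?_⟩
      have : ∑ j ∈ Finset.range n, p * mu j = p * d := by rw [← hnu_eq, hsum]
      rw [← Finset.mul_sum] at this
      exact Nat.eq_of_mul_eq_mul_left hp1 this
    have hcmu : ∀ i, carry p n mu i = carry p n lam i := by
      intro i
      have h1 : carry p n nu (i + 1) = carry p n mu i := by
        rw [hnu_eq]; exact carry_pmul_succ p n hp1 mu i
      have h2 := hcnu (i + 1)
      rw [carry_pmul_succ p n hp1 lam i] at h2
      rw [← h1, h2]
    have hdom := H mu hmu_part hcmu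
    intro k
    calc ∑ i ∈ Finset.range k, nu i = ∑ i ∈ Finset.range k, p * mu i := by rw [← hnu_eq]
      _ = p * ∑ i ∈ Finset.range k, mu i := (Finset.mul_sum _ _ _).symm
      _ ≤ p * ∑ i ∈ Finset.range k, lam i := Nat.mul_le_mul_left p (hdom k)
      _ = ∑ i ∈ Finset.range k, p * lam i := Finset.mul_sum _ _ _
  · -- backward: pd-statement implies d-statement
    intro H mu hmu hcmu
    have hpart : IsPartition n (p * d) (fun j => p * mu j) := isPartition_pmul p n d mu hmu
    have hcar : ∀ i, carry p n (fun j => p * mu j) i = carry p n (fun j => p * lam j) i := by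
      intro i
      cases i with
      | zero => rw [carry_pmul_zero, carry_pmul_zero]
      | succ k =>
        rw [carry_pmul_succ p n hp1 mu k, carry_pmul_succ p n hp1 lam k]
        exact hcmu k
    have hdom := H (fun j => p * mu j) hpart hcar
    intro k
    have h1 := hdom k
    simp only at h1
    rw [← Finset.mul_sum, ← Finset.mul_sum] at h1
    exact Nat.le_of_mul_le_mul_left h1 hp1
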